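/- For all positive integers k and l with l ≥ 2, W(k,l) > (2(l−1)·k^(l−1))^(1/2); equivalently, W(k,l)² > 2(l−1)·k^(l−1). -/

import Mathlib

/-- `c` (viewed as a coloring of `{1,…,m}`) contains a monochromatic arithmetic
progression of length `l`: there are positive `a`, `d` with `a + (l-1)d ≤ m`
and `c (a) = c (a+d) = … = c (a+(l-1)d)`. -/
def ContainsAP (l m : ℕ) (c : ℕ → ℕ) : Prop :=
  ∃ a d : ℕ, 0 < a ∧ 0 < d ∧ a + (l - 1) * d ≤ m ∧
    ∀ j : ℕ, j ≤ l - 1 → c (a + j * d) = c a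

/-- `c` is a coloring of `{1,…,m}` with colors in `{1,…,k}`. -/
def IsColoring (k m : ℕ) (c : ℕ → ℕ) : Prop :=
  ∀ i : ℕ, 1 ≤ i → i ≤ m → 1 ≤ c i ∧ c i ≤ k

/-- The van der Waerden number `W k l`: the least positive `m` such that every
coloring of `{1,…,m}` with `k` colors contains a monochromatic arithmetic
progression of length `l`. -/
noncomputable def vdW (k l : ℕ) : ℕ :=
  sInf {m : ℕ | 0 < m ∧ ∀ c : ℕ → ℕ, IsColoring k m c → ContainsAP l m c}

open Combinatorics Finset

lemma vdw_exists (k l : ℕ) (hk : 0 < k) (hl : 2 ≤ l) :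
    ∃ m, 0 < m ∧ ∀ c : ℕ → ℕ, IsColoring k m c → ContainsAP l m c := by
  obtain ⟨ι, fι, hι⟩ := Line.exists_mono_in_high_dimension (Fin l) (Fin k)
  refine ⟨1 + Fintype.card ι * (l - 1), by omega, fun c hc => ?_⟩
  set m := 1 + Fintype.card ι * (l - 1) with hm
  have hsum : ∀ v : ι → Fin l, 1 + ∑ i, (v i).val ≤ m := by
    intro v
    have : ∑ i, (v i).val ≤ ∑ _i : ι, (l - 1) :=
      Finset.sum_le_sum (fun i _ => by have := (v i).2; omega)
    simp only [Finset.sum_const, smul_eq_mul, Finset.card_univ] at this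
    omega
  have hcr : ∀ v : ι → Fin l, c (1 + ∑ i, (v i).val) - 1 < k := by
    intro v
    have h1 := hc (1 + ∑ i, (v i).val) (by omega) (hsum v)
    omega
  set C : (ι → Fin l) → Fin k := fun v => ⟨c (1 + ∑ i, (v i).val) - 1, hcr v⟩ with hC
  obtain ⟨ℓ, col, hcol⟩ := hι C
  classical
  set s : Finset ι := Finset.univ.filter (fun i => ℓ.idxFun i = none) with hs
  set d := s.card with hd
  have hdpos : 0 < d := by
    obtain ⟨i, hi⟩ := ℓ.proper
    exact Finset.card_pos.2 ⟨i, by simp [hs, hi]⟩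
  -- value of sum along the line
  have hline : ∀ x : Fin l, ∑ i, (ℓ x i).val = x.val * d + ∑ i ∈ sᶜ, ((ℓ.idxFun i).getD x).val := by
    intro x
    rw [← Finset.sum_add_sum_compl s]
    congr 1
    · rw [Finset.sum_congr rfl (fun i hi => ?_), Finset.sum_const, smul_eq_mul, mul_comm]
      simp only [hs, Finset.mem_filter] at hi
      simp [Line.coe_apply, hi.2]
  have hfix : ∀ x y : Fin l, ∑ i ∈ sᶜ, ((ℓ.idxFun i).getD x).val = ∑ i ∈ sᶜ, ((ℓ.idxFun i).getD y).val := by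
    intro x y
    refine Finset.sum_congr rfl (fun i hi => ?_)
    simp only [hs, Finset.compl_filter, Finset.mem_filter] at hi
    obtain ⟨a, ha⟩ := Option.ne_none_iff_exists'.1 hi.2
    simp [ha]
  set x0 : Fin l := ⟨0, by omega⟩ with hx0
  set b := ∑ i ∈ sᶜ, ((ℓ.idxFun i).getD x0).val with hb
  refine ⟨1 + b, d, by omega, hdpos, ?_, ?_⟩
  · -- bound
    have := hsum (ℓ ⟨l-1, by omega⟩)
    rw [hline, hfix ⟨l-1, by omega⟩ x0] at this
    have e : ((⟨l-1, by omega⟩ : Fin l) : ℕ) = l - 1 := rfl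
    rw [e] at this
    omega
  · intro j hj
    have hx : j < l := by omega
    have hkey := (hcol ⟨j, hx⟩).trans (hcol x0).symm
    have e1 : ∑ i, (ℓ ⟨j, hx⟩ i).val = j * d + b := by
      rw [hline, hfix ⟨j, hx⟩ x0]
    have e2 : ∑ i, (ℓ x0 i).val = b := by
      rw [hline]; simp [hx0]; rfl
    rw [hC] at hkey
    simp only [Fin.mk.injEq, e1, e2] at hkey
    have hr1 := hc (1 + (j * d + b)) (by omega) (by rw [← e1]; exact hsum _)
    have hr2 := hc (1 + b) (by omega) (by rw [← e2]; exact hsum _)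
    have : (1 : ℕ) + b + j * d = 1 + (j * d + b) := by ring
    rw [this]
    omega


lemma gauss_bound (m : ℕ) : 2 * ∑ t ∈ Icc 1 m, (m - t) = m * (m - 1) := by
  have h : ∑ t ∈ Icc 1 m, (m - t) = ∑ i ∈ range m, i := by
    apply Finset.sum_nbij' (fun t => m - t) (fun i => m - i)
    · intro t ht; simp only [mem_Icc] at ht; simp only [mem_range]; omega
    · intro i hi; simp only [mem_range] at hi; simp only [mem_Icc]; omega
    · intro t ht; simp only [mem_Icc] at ht; omega
    · intro i hi; simp only [mem_range] at hi; omega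
    · intro t ht; rfl
  rw [h, mul_comm]
  exact Finset.sum_range_id_mul_two m

lemma step2 (q m : ℕ) (hq : 0 < q) :
    ∑ t ∈ Icc 1 (q * m), (m - t) = ∑ t ∈ Icc 1 m, (m - t) := by
  symm
  apply Finset.sum_subset
  · apply Finset.Icc_subset_Icc_right; nlinarith
  · intro t ht hnt
    simp only [mem_Icc] at ht hnt
    omega

lemma step1 (q m : ℕ) (hq : 0 < q) :
    q * ∑ d ∈ Icc 1 m, (m - q * d) ≤ ∑ t ∈ Icc 1 (q * m), (m - t) := by
  classical
  have hcover : Icc 1 (q * m) = (Icc 1 m).biUnion (fun d => Ioc (q * (d - 1)) (q * d)) := by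
    ext t
    simp only [mem_Icc, mem_biUnion, mem_Ioc]
    constructor
    · rintro ⟨h1, h2⟩
      obtain ⟨N, r, hr, hdm⟩ : ∃ N r, r < q ∧ t - 1 = q * N + r :=
        ⟨(t - 1) / q, (t - 1) % q, Nat.mod_lt _ hq, (Nat.div_add_mod (t - 1) q).symm⟩
      have e : q * (N + 1) = q * N + q := by ring
      have hNm : N < m := by
        have hlt : q * N < q * m := by omega
        exact Nat.lt_of_mul_lt_mul_left hlt
      refine ⟨N + 1, ⟨Nat.succ_le_succ (Nat.zero_le _), by omega⟩, ?_, by omega⟩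
      have e2 : q * (N + 1 - 1) = q * N := by rw [Nat.add_sub_cancel]
      omega
    · rintro ⟨d, ⟨hd1, hd2⟩, h1, h2⟩
      have : q * d ≤ q * m := Nat.mul_le_mul_left q hd2
      omega
  rw [hcover, Finset.sum_biUnion, Finset.mul_sum]
  · apply Finset.sum_le_sum
    intro d hd
    simp only [mem_Icc] at hd
    have e3 : q * (d - 1) + q = q * d := by
      calc q * (d - 1) + q = q * ((d - 1) + 1) := by ring
        _ = q * d := by rw [Nat.sub_add_cancel hd.1]
    calc q * (m - q * d) = ∑ _t ∈ Ioc (q * (d-1)) (q * d), (m - q * d) := by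
          rw [Finset.sum_const, Nat.card_Ioc, smul_eq_mul]
          congr 1
          omega
      _ ≤ ∑ t ∈ Ioc (q * (d-1)) (q * d), (m - t) := by
          apply Finset.sum_le_sum
          intro t ht
          simp only [mem_Ioc] at ht
          omega
  · intro d1 h1 d2 h2 hne
    simp only [Set.mem_setOf_eq, coe_Icc, Set.mem_Icc] at h1 h2
    apply Finset.disjoint_left.2
    intro t ht1 ht2
    simp only [mem_Ioc] at ht1 ht2
    rcases Nat.lt_or_ge d1 d2 with h | h
    · have : q * d1 ≤ q * (d2 - 1) := Nat.mul_le_mul_left q (by omega)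
      omega
    · have hlt : d2 < d1 := by omega
      have : q * d2 ≤ q * (d1 - 1) := Nat.mul_le_mul_left q (by omega)
      omega

lemma sum_bound (q m : ℕ) (hq : 0 < q) :
    2 * q * ∑ d ∈ Icc 1 m, (m - q * d) ≤ m * (m - 1) := by
  have := step1 q m hq
  have := step2 q m hq
  have := gauss_bound m
  nlinarith



lemma counting (k l m : ℕ) (hk : 0 < k) (hl : 2 ≤ l) (hm : 0 < m)
    (H : ∀ c : ℕ → ℕ, IsColoring k m c → ContainsAP l m c) :
    2 * (l - 1) * k ^ (l - 1) < m ^ 2 := by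
  classical
  set q := l - 1 with hqdef
  have hq : 0 < q := by omega
  -- q < m
  have hqm : q < m := by
    obtain ⟨a, d, ha, hd, hle, -⟩ := H (fun _ => 1) (fun i _ _ => ⟨le_refl 1, hk⟩)
    rw [← hqdef] at hle
    have : q ≤ q * d := Nat.le_mul_of_pos_right q hd
    omega
  -- extension of a finitary coloring
  set ext : (Fin m → Fin k) → ℕ → ℕ :=
    fun f i => if h : i - 1 < m then (f ⟨i - 1, h⟩).val + 1 else 1 with hext
  have hext_col : ∀ f, IsColoring k m (ext f) := by
    intro f i h1 h2
    have h : i - 1 < m := by omega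
    simp only [hext, dif_pos h]
    have := (f ⟨i - 1, h⟩).2
    omega
  set P : Finset (ℕ × ℕ) := (Icc 1 m ×ˢ Icc 1 m).filter (fun p => p.1 + q * p.2 ≤ m) with hP
  set Bad : ℕ × ℕ → Finset (Fin m → Fin k) :=
    fun p => univ.filter (fun f => ∀ j ≤ q, ext f (p.1 + j * p.2) = ext f p.1) with hBad
  have hcover : (univ : Finset (Fin m → Fin k)) ⊆ P.biUnion Bad := by
    intro f _
    obtain ⟨a, d, ha, hd, hle, hmono⟩ := H (ext f) (hext_col f)
    rw [← hqdef] at hle hmono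
    rw [Finset.mem_biUnion]
    refine ⟨(a, d), ?_, ?_⟩
    · rw [hP, Finset.mem_filter, Finset.mem_product, Finset.mem_Icc, Finset.mem_Icc]
      have h1 : d ≤ q * d := Nat.le_mul_of_pos_left d hq
      exact ⟨⟨⟨ha, by omega⟩, ⟨hd, by omega⟩⟩, hle⟩
    · rw [hBad, Finset.mem_filter]
      exact ⟨Finset.mem_univ f, hmono⟩
  -- bounding the card of Bad p
  have hbad : ∀ p ∈ P, (Bad p).card ≤ k ^ (m - q) := by
    rintro ⟨a, d⟩ hp
    rw [hP, Finset.mem_filter, Finset.mem_product, Finset.mem_Icc, Finset.mem_Icc] at hp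
    obtain ⟨⟨⟨ha1, ha2⟩, hd1, hd2⟩, hle⟩ := hp
    have hle' : a + q * d ≤ m := hle
    clear hle
    set g : ℕ → Fin m := fun j => ⟨min (a + j * d) m - 1, by omega⟩ with hg
    have hgval : ∀ j ≤ q, (g j : ℕ) = a + j * d - 1 := by
      intro j hj
      have : j * d ≤ q * d := Nat.mul_le_mul_right d hj
      simp only [hg]
      omega
    set s : Finset (Fin m) := (Icc 1 q).image g with hs
    have hginj : Set.InjOn g (Icc 1 q) := by
      intro j1 h1 j2 h2 hval
      simp only [Finset.coe_Icc, Set.mem_Icc] at h1 h2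
      have e1 := hgval j1 h1.2
      have e2 := hgval j2 h2.2
      have : (g j1 : ℕ) = (g j2 : ℕ) := by rw [hval]
      rw [e1, e2] at this
      have : j1 * d = j2 * d := by
        have b1 : 1 * d ≤ j1 * d := Nat.mul_le_mul_right d h1.1
        have b2 : 1 * d ≤ j2 * d := Nat.mul_le_mul_right d h2.1
        omega
      exact Nat.eq_of_mul_eq_mul_right hd1 this
    have hscard : s.card = q := by
      rw [hs, Finset.card_image_of_injOn hginj, Nat.card_Icc]
      omega
    have hccard : (sᶜ).card = m - q := by
      rw [Finset.card_compl, hscard, Fintype.card_fin]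
    have hA : (⟨a - 1, by omega⟩ : Fin m) ∈ sᶜ := by
      rw [Finset.mem_compl, hs, Finset.mem_image]
      rintro ⟨j, hj, hgj⟩
      simp only [Finset.mem_Icc] at hj
      have := hgval j hj.2
      have hv : (g j : ℕ) = a - 1 := by rw [hgj]
      have hb : 1 * d ≤ j * d := Nat.mul_le_mul_right d hj.1
      omega
    have hinj : (Bad (a, d)).card ≤ Fintype.card ((sᶜ : Finset (Fin m)) → Fin k) := by
      rw [← Fintype.card_coe (Bad (a, d))]
      apply Fintype.card_le_of_injective (fun f => fun x => f.1 x.1)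
      intro f1 f2 hfg
      have hres : ∀ x (hx : x ∈ sᶜ), f1.1 x = f2.1 x := by
        intro x hx
        exact congrFun hfg ⟨x, hx⟩
      have hmono' : ∀ (f : {x // x ∈ Bad (a,d)}) j, j ≤ q →
          f.1 (g j) = f.1 ⟨a - 1, by omega⟩ := by
        rintro ⟨f, hf⟩ j hj
        rw [hBad, Finset.mem_filter] at hf
        have hcond := hf.2 j hj
        have hjd : j * d ≤ q * d := Nat.mul_le_mul_right d hj
        have h1 : a + j * d - 1 < m := by omega
        have h2 : a - 1 < m := by omega
        simp only [hext, dif_pos h1, dif_pos h2] at hcond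
        have hval : f ⟨a + j * d - 1, h1⟩ = f ⟨a - 1, h2⟩ := by
          have := Nat.add_right_cancel hcond
          exact Fin.val_injective this
        have : g j = (⟨a + j * d - 1, h1⟩ : Fin m) := by
          apply Fin.ext
          exact hgval j hj
        rw [this]
        exact hval
      apply Subtype.ext
      funext x
      by_cases hx : x ∈ sᶜ
      · exact hres x hx
      · have hxs : x ∈ s := by
          rw [Finset.mem_compl, not_not] at hx
          exact hx
        rw [hs, Finset.mem_image] at hxs
        obtain ⟨j, hj, hgj⟩ := hxs
        simp only [Finset.mem_Icc] at hj
        rw [← hgj]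
        rw [hmono' f1 j hj.2, hmono' f2 j hj.2]
        exact hres _ hA
    calc (Bad (a, d)).card ≤ Fintype.card ((sᶜ : Finset (Fin m)) → Fin k) := hinj
      _ = k ^ (m - q) := by
          rw [Fintype.card_fun, Fintype.card_coe, Fintype.card_fin, hccard]
  -- main counting inequality
  have hcard : k ^ m ≤ P.card * k ^ (m - q) := by
    calc k ^ m = (univ : Finset (Fin m → Fin k)).card := by
          rw [Finset.card_univ, Fintype.card_fun, Fintype.card_fin, Fintype.card_fin]
      _ ≤ (P.biUnion Bad).card := Finset.card_le_card hcover
      _ ≤ ∑ p ∈ P, (Bad p).card := Finset.card_biUnion_le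
      _ ≤ ∑ _p ∈ P, k ^ (m - q) := Finset.sum_le_sum hbad
      _ = P.card * k ^ (m - q) := by rw [Finset.sum_const, smul_eq_mul]
  have hPk : k ^ q ≤ P.card := by
    by_contra h
    push_neg at h
    have h2 : P.card * k ^ (m - q) < k ^ q * k ^ (m - q) :=
      mul_lt_mul_of_pos_right h (pow_pos hk _)
    rw [← pow_add] at h2
    have he : q + (m - q) = m := by omega
    rw [he] at h2
    omega
  -- bounding P.card
  have hPsum : P.card ≤ ∑ d ∈ Icc 1 m, (m - q * d) := by
    have hsub : P ⊆ (Icc 1 m).biUnion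
        (fun d => (Icc 1 (m - q * d)).image (fun a => (a, d))) := by
      intro p hp
      rw [hP, Finset.mem_filter, Finset.mem_product, Finset.mem_Icc, Finset.mem_Icc] at hp
      rw [Finset.mem_biUnion]
      refine ⟨p.2, Finset.mem_Icc.2 hp.1.2, Finset.mem_image.2 ⟨p.1, ?_, ?_⟩⟩
      · rw [Finset.mem_Icc]
        exact ⟨hp.1.1.1, by omega⟩
      · exact Prod.ext rfl rfl
    calc P.card ≤ ((Icc 1 m).biUnion
          (fun d => (Icc 1 (m - q * d)).image (fun a => (a, d)))).card :=
          Finset.card_le_card hsub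
      _ ≤ ∑ d ∈ Icc 1 m, ((Icc 1 (m - q * d)).image (fun a => (a, d))).card :=
          Finset.card_biUnion_le
      _ ≤ ∑ d ∈ Icc 1 m, (m - q * d) := by
          apply Finset.sum_le_sum
          intro d _
          calc ((Icc 1 (m - q * d)).image (fun a => (a, d))).card
              ≤ (Icc 1 (m - q * d)).card := Finset.card_image_le
            _ = m - q * d := by rw [Nat.card_Icc]; omega
  have hPm : 2 * q * P.card ≤ m * (m - 1) := by
    calc 2 * q * P.card ≤ 2 * q * ∑ d ∈ Icc 1 m, (m - q * d) :=
          Nat.mul_le_mul_left _ hPsum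
      _ ≤ m * (m - 1) := sum_bound q m hq
  calc 2 * q * k ^ q ≤ 2 * q * P.card := Nat.mul_le_mul_left _ hPk
    _ ≤ m * (m - 1) := hPm
    _ < m * m := mul_lt_mul_of_pos_left (by omega : m - 1 < m) hm
    _ = m ^ 2 := (pow_two m).symm

theorem vdW_erdos_rado (k l : ℕ) (hk : 0 < k) (hl : 2 ≤ l) :
    (vdW k l) ^ 2 > 2 * (l - 1) * k ^ (l - 1) := by
  have hne : {m : ℕ | 0 < m ∧ ∀ c : ℕ → ℕ, IsColoring k m c → ContainsAP l m c}.Nonempty :=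
    vdw_exists k l hk hl
  have hmem := Nat.sInf_mem hne
  exact counting k l (vdW k l) hk hl hmem.1 hmem.2
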